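/- Let Γ(G) be a graph product of nontrivial countable groups over a finite simple graph Γ with vertex set {v₁, …, v_n}. For any elements s₁, t₁, …, s_n, t_n ∈ Γ(G), the intersection of double cosets ⋂_{i=1}^n s_i Γ_{S_{v_i}}(G) t_i is a finite set, where S_v denotes the link of the vertex v. -/

import Mathlib

open scoped Pointwise ComplexOrder

namespace PPx

universe u v w

/-- The set of commutation relators defining a graph product. -/
def graphProductRels {V : Type u} (Γ : SimpleGraph V) (Gv : V → Type v)
    [∀ a, Group (Gv a)] : Set (Monoid.CoprodI Gv) :=
  {x | ∃ u w : V, Γ.Adj u w ∧ ∃ (g : Gv u) (h : Gv w),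
    x = Monoid.CoprodI.of g * Monoid.CoprodI.of h *
        (Monoid.CoprodI.of g)⁻¹ * (Monoid.CoprodI.of h)⁻¹}

/-- The graph product `Γ(G)` of the family of groups `Gv` over the graph `Γ`. -/
def GraphProduct {V : Type u} (Γ : SimpleGraph V) (Gv : V → Type v)
    [∀ a, Group (Gv a)] : Type (max u v) :=
  Monoid.CoprodI Gv ⧸ Subgroup.normalClosure (graphProductRels Γ Gv)

instance {V : Type u} (Γ : SimpleGraph V) (Gv : V → Type v) [∀ a, Group (Gv a)] :
    Group (GraphProduct Γ Gv) :=
  inferInstanceAs (Group (Monoid.CoprodI Gv ⧸ Subgroup.normalClosure (graphProductRels Γ Gv)))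

/-- The graph distance between two vertices, valued in `ℕ∞` (`⊤` if not connected). -/
noncomputable def graphDist {V : Type u} (Γ : SimpleGraph V) (a b : V) : ℕ∞ :=
  ⨅ p : Γ.Walk a b, (p.length : ℕ∞)

/-- The radius of a graph, `r(Γ) = min_v max_w d(v,w)`, valued in `ℕ∞`. -/
noncomputable def graphRadius {V : Type u} (Γ : SimpleGraph V) : ℕ∞ :=
  ⨅ a : V, ⨆ b : V, graphDist Γ a b


/-- The canonical homomorphism `G_a →* Γ(G)`. -/
def GraphProduct.of {V : Type u} (Γ : SimpleGraph V) (Gv : V → Type v)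
    [∀ a, Group (Gv a)] (a : V) : Gv a →* GraphProduct Γ Gv :=
  (QuotientGroup.mk' (Subgroup.normalClosure (graphProductRels Γ Gv))).comp Monoid.CoprodI.of

/-- For `T ⊆ V(Γ)`, the subgroup `Γ_T(G)` of `Γ(G)` generated by the vertex groups `G_v`
with `v ∈ T`. -/
def GraphProduct.vertexSubgroup {V : Type u} (Γ : SimpleGraph V) (Gv : V → Type v)
    [∀ a, Group (Gv a)] (T : Set V) : Subgroup (GraphProduct Γ Gv) :=
  ⨆ a ∈ T, (GraphProduct.of Γ Gv a).range

section API

variable {V : Type u} (Γ : SimpleGraph V) (Gv : V → Type v) [∀ a, Group (Gv a)]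

/-- Generators corresponding to adjacent vertices commute. -/
theorem GraphProduct.of_commute {a b : V} (hab : Γ.Adj a b) (g : Gv a) (k : Gv b) :
    Commute (GraphProduct.of Γ Gv a g) (GraphProduct.of Γ Gv b k) := by
  rw [← commutatorElement_eq_one_iff_commute]
  have hmem : (Monoid.CoprodI.of g * Monoid.CoprodI.of k * (Monoid.CoprodI.of g)⁻¹ *
      (Monoid.CoprodI.of k)⁻¹) ∈ Subgroup.normalClosure (graphProductRels Γ Gv) :=
    Subgroup.subset_normalClosure ⟨a, b, hab, g, k, rfl⟩
  have := (QuotientGroup.eq_one_iff (N := Subgroup.normalClosure (graphProductRels Γ Gv))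
    (Monoid.CoprodI.of g * Monoid.CoprodI.of k * (Monoid.CoprodI.of g)⁻¹ *
      (Monoid.CoprodI.of k)⁻¹)).mpr hmem
  rw [commutatorElement_def]; exact this

/-- The universal property of the graph product. -/
def GraphProduct.lift {H : Type w} [Group H] (f : ∀ a, Gv a →* H)
    (hf : ∀ a b, Γ.Adj a b → ∀ (g : Gv a) (k : Gv b), Commute (f a g) (f b k)) :
    GraphProduct Γ Gv →* H :=
  QuotientGroup.lift _ (Monoid.CoprodI.lift f) (by
    intro x hx
    refine MonoidHom.mem_ker.mp (Subgroup.normalClosure_le_normal ?_ hx)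
    rintro y ⟨a, b, hab, g, k, rfl⟩
    have h1 := commutatorElement_eq_one_iff_commute.mpr (hf a b hab g k)
    rw [commutatorElement_def] at h1
    simp only [SetLike.mem_coe, MonoidHom.mem_ker, map_mul, map_inv, Monoid.CoprodI.lift_of]
    exact h1)

@[simp] theorem GraphProduct.lift_of {H : Type w} [Group H] (f : ∀ a, Gv a →* H)
    (hf : ∀ a b, Γ.Adj a b → ∀ (g : Gv a) (k : Gv b), Commute (f a g) (f b k))
    (a : V) (g : Gv a) :
    GraphProduct.lift Γ Gv f hf (GraphProduct.of Γ Gv a g) = f a g := by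
  show QuotientGroup.lift _ (Monoid.CoprodI.lift f) _
      (QuotientGroup.mk (Monoid.CoprodI.of g) : GraphProduct Γ Gv) = f a g
  exact Monoid.CoprodI.lift_of f g

theorem GraphProduct.of_mem_vertexSubgroup {T : Set V} {a : V} (ha : a ∈ T) (g : Gv a) :
    GraphProduct.of Γ Gv a g ∈ GraphProduct.vertexSubgroup Γ Gv T :=
  Subgroup.mem_iSup_of_mem a (Subgroup.mem_iSup_of_mem ha ⟨g, rfl⟩)

theorem GraphProduct.vertexSubgroup_le {T : Set V} {K : Subgroup (GraphProduct Γ Gv)}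
    (h : ∀ a ∈ T, ∀ g : Gv a, GraphProduct.of Γ Gv a g ∈ K) :
    GraphProduct.vertexSubgroup Γ Gv T ≤ K := by
  refine iSup_le fun a => iSup_le fun ha => ?_
  rintro x ⟨g, rfl⟩
  exact h a ha g

theorem GraphProduct.eq_one_of_isEmpty [IsEmpty V] (x : GraphProduct Γ Gv) : x = 1 := by
  obtain ⟨y, rfl⟩ := QuotientGroup.mk'_surjective (Subgroup.normalClosure (graphProductRels Γ Gv)) x
  have h1 : y ∈ (⊥ : Submonoid (Monoid.CoprodI Gv)) := by
    have htop := Monoid.CoprodI.mclosure_iUnion_range_of (M := Gv)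
    rw [Set.iUnion_of_empty, Submonoid.closure_empty] at htop
    rw [htop]
    trivial
  rw [Submonoid.mem_bot.mp h1, map_one]
  rfl

variable (v : V)

/-- The retraction of a graph product killing the vertex group at `v`. -/
noncomputable def GraphProduct.restrict :
    GraphProduct Γ Gv →*
      GraphProduct (Γ.comap (Subtype.val : {u // u ≠ v} → V)) (fun s => Gv s.val) :=
  GraphProduct.lift Γ Gv
    (fun a => @dite _ (a = v) (Classical.dec _) (fun _ => 1) (fun h =>
      GraphProduct.of (Γ.comap (Subtype.val : {u // u ≠ v} → V)) (fun s => Gv s.val) ⟨a, h⟩))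
    (by
      intro a b hab g k
      by_cases ha : a = v
      · rw [dif_pos ha]
        exact Commute.one_left _
      by_cases hb : b = v
      · rw [dif_pos hb]
        exact Commute.one_right _
      rw [dif_neg ha, dif_neg hb]
      exact GraphProduct.of_commute (Γ.comap (Subtype.val : {u // u ≠ v} → V))
        (fun s => Gv s.val)
        (show (Γ.comap (Subtype.val : {u // u ≠ v} → V)).Adj ⟨a, ha⟩ ⟨b, hb⟩ from hab) g k)

/-- The natural map from the graph product over an induced subgraph. -/
def GraphProduct.incl :
    GraphProduct (Γ.comap (Subtype.val : {u // u ≠ v} → V)) (fun s => Gv s.val) →*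
      GraphProduct Γ Gv :=
  GraphProduct.lift _ _ (fun s => GraphProduct.of Γ Gv s.val)
    (fun s t hst g k => GraphProduct.of_commute Γ Gv (by simpa using hst) g k)

@[simp] theorem GraphProduct.restrict_of_ne {a : V} (h : a ≠ v) (g : Gv a) :
    GraphProduct.restrict Γ Gv v (GraphProduct.of Γ Gv a g) =
      GraphProduct.of (Γ.comap (Subtype.val : {u // u ≠ v} → V)) (fun s => Gv s.val) ⟨a, h⟩ g := by
  rw [GraphProduct.restrict, GraphProduct.lift_of]
  rw [dif_neg h]

@[simp] theorem GraphProduct.restrict_of_eq (g : Gv v) :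
    GraphProduct.restrict Γ Gv v (GraphProduct.of Γ Gv v g) = 1 := by
  rw [GraphProduct.restrict, GraphProduct.lift_of]
  rw [dif_pos rfl]
  rfl

@[simp] theorem GraphProduct.incl_of (s : {u // u ≠ v}) (g : Gv s.val) :
    GraphProduct.incl Γ Gv v
      (GraphProduct.of (Γ.comap (Subtype.val : {u // u ≠ v} → V)) (fun s => Gv s.val) s g) =
      GraphProduct.of Γ Gv s.val g := by
  rw [GraphProduct.incl, GraphProduct.lift_of]

theorem GraphProduct.incl_restrict_eq {T : Set V} (hT : v ∉ T) {x : GraphProduct Γ Gv}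
    (hx : x ∈ GraphProduct.vertexSubgroup Γ Gv T) :
    GraphProduct.incl Γ Gv v (GraphProduct.restrict Γ Gv v x) = x := by
  have hle : GraphProduct.vertexSubgroup Γ Gv T ≤
      MonoidHom.eqLocus ((GraphProduct.incl Γ Gv v).comp (GraphProduct.restrict Γ Gv v))
        (MonoidHom.id _) := by
    refine GraphProduct.vertexSubgroup_le Γ Gv fun a ha g => ?_
    have hav : a ≠ v := fun h => hT (h ▸ ha)
    show GraphProduct.incl Γ Gv v (GraphProduct.restrict Γ Gv v (GraphProduct.of Γ Gv a g)) =
      GraphProduct.of Γ Gv a g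
    rw [GraphProduct.restrict_of_ne Γ Gv v hav, GraphProduct.incl_of]
  exact hle hx

theorem GraphProduct.restrict_mem_vertexSubgroup {T : Set V} {x : GraphProduct Γ Gv}
    (hx : x ∈ GraphProduct.vertexSubgroup Γ Gv T) :
    GraphProduct.restrict Γ Gv v x ∈
      GraphProduct.vertexSubgroup (Γ.comap (Subtype.val : {u // u ≠ v} → V))
        (fun s => Gv s.val) (Subtype.val ⁻¹' T) := by
  have hle : GraphProduct.vertexSubgroup Γ Gv T ≤
      Subgroup.comap (GraphProduct.restrict Γ Gv v)
        (GraphProduct.vertexSubgroup (Γ.comap (Subtype.val : {u // u ≠ v} → V))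
          (fun s => Gv s.val) (Subtype.val ⁻¹' T)) := by
    refine GraphProduct.vertexSubgroup_le Γ Gv fun a ha g => ?_
    by_cases hav : a = v
    · subst hav
      simp only [Subgroup.mem_comap, GraphProduct.restrict_of_eq]
      exact one_mem _
    · simp only [Subgroup.mem_comap, GraphProduct.restrict_of_ne Γ Gv v hav]
      exact GraphProduct.of_mem_vertexSubgroup (Γ.comap (Subtype.val : {u // u ≠ v} → V))
        (fun s => Gv s.val)
        (show (⟨a, hav⟩ : {u // u ≠ v}) ∈ Subtype.val ⁻¹' T from ha) g
  exact hle hx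

end API

/-- Key lemma: an element conjugate into every link subgroup is trivial. -/
theorem GraphProduct.eq_one_of_forall_conj_mem (n : ℕ) :
    ∀ {V : Type u} [Fintype V] (Γ : SimpleGraph V) (Gv : V → Type v)
      [∀ a, Group (Gv a)], Fintype.card V ≤ n →
      ∀ (g : V → GraphProduct Γ Gv) (z : GraphProduct Γ Gv),
      (∀ a : V, (g a)⁻¹ * z * g a ∈
        GraphProduct.vertexSubgroup Γ Gv (Γ.neighborSet a)) → z = 1 := by
  induction n with
  | zero =>
    intro V _ Γ Gv _ hc g z _
    have : IsEmpty V := Fintype.card_eq_zero_iff.mp (Nat.le_zero.mp hc)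
    exact GraphProduct.eq_one_of_isEmpty Γ Gv z
  | succ n ih =>
    intro V _ Γ Gv _ hc g z hz
    rcases isEmpty_or_nonempty V with hV | hV
    · exact GraphProduct.eq_one_of_isEmpty Γ Gv z
    have hρ : ∀ v : V, GraphProduct.restrict Γ Gv v z = 1 := by
      intro v
      haveI : Fintype {u // u ≠ v} := Fintype.ofFinite _
      set Γ' := Γ.comap (Subtype.val : {u // u ≠ v} → V) with hΓ'
      set Gv' := fun s : {u // u ≠ v} => Gv s.val with hGv'
      refine ih Γ' Gv' ?_ (fun s => GraphProduct.restrict Γ Gv v (g s.val)) _ ?_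
      · have : Fintype.card {u // u ≠ v} < Fintype.card V := by
          refine Fintype.card_lt_of_injective_of_notMem
            (Subtype.val : {u // u ≠ v} → V) Subtype.val_injective (b := v) ?_
          rintro ⟨⟨u, hu⟩, h⟩
          exact hu h
        omega
      · intro a
        have h1 := GraphProduct.restrict_mem_vertexSubgroup Γ Gv v (hz a.val)
        have hset : (Subtype.val ⁻¹' Γ.neighborSet a.val : Set {u // u ≠ v}) =
            Γ'.neighborSet a := rfl
        rw [hset] at h1
        simpa [map_mul, map_inv] using h1
    obtain ⟨v⟩ := hV
    set w := (g v)⁻¹ * z * g v with hw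
    have hwmem := hz v
    have hwv : v ∉ Γ.neighborSet v := by simp
    have hrw : GraphProduct.restrict Γ Gv v w = 1 := by
      rw [hw, map_mul, map_mul, map_inv, hρ v]
      group
    have := GraphProduct.incl_restrict_eq Γ Gv v hwv hwmem
    rw [hrw, map_one] at this
    have hw1 : w = 1 := this.symm
    have : z = g v * w * (g v)⁻¹ := by rw [hw]; group
    rw [this, hw1]
    group

/-- In a graph product of nontrivial countable groups over a finite simple graph with
vertices `v₁, …, vₙ`, any intersection of double cosets `⋂ᵢ sᵢ Γ_{S_{vᵢ}}(G) tᵢ` of the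
link subgroups is finite. -/
theorem iInter_doubleCoset_linkSubgroup_finite
    {V : Type u} [Fintype V] (Γ : SimpleGraph V) (Gv : V → Type v)
    [∀ a, Group (Gv a)] [∀ a, Nontrivial (Gv a)] [∀ a, Countable (Gv a)]
    (s t : V → GraphProduct Γ Gv) :
    (⋂ a : V, (fun x => s a * x * t a) ''
      (GraphProduct.vertexSubgroup Γ Gv (Γ.neighborSet a) : Set (GraphProduct Γ Gv))).Finite := by
  rcases Set.eq_empty_or_nonempty (⋂ a : V, (fun x => s a * x * t a) ''
      (GraphProduct.vertexSubgroup Γ Gv (Γ.neighborSet a) : Set (GraphProduct Γ Gv))) with h | ⟨x, hx⟩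
  · rw [h]; exact Set.finite_empty
  refine Set.Finite.subset (Set.finite_singleton x) ?_
  intro y hy
  simp only [Set.mem_iInter, Set.mem_image, SetLike.mem_coe] at hx hy
  have key : y * x⁻¹ = 1 := by
    refine GraphProduct.eq_one_of_forall_conj_mem (Fintype.card V) Γ Gv le_rfl
      s (y * x⁻¹) fun a => ?_
    obtain ⟨h1, hm1, he1⟩ := hx a
    obtain ⟨h2, hm2, he2⟩ := hy a
    have : (s a)⁻¹ * (y * x⁻¹) * s a = h2 * h1⁻¹ := by
      rw [← he1, ← he2]; group
    rw [this]
    exact mul_mem hm2 (inv_mem hm1)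
  have : y = x := by
    have := mul_inv_eq_one.mp key
    exact this
  simp [this]

end PPx
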